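/- Let Y = {y₁,…,y_k} ⊂ ℝ^{k+1} be a similarity embedding with k distinct points. Then there exist constants C > 0 and δ > 0, depending only on Y, with the following property: for every similarity embedding Y' = {y₁',…,y_{k+2}'} ⊂ ℝ^{k+1} with k+2 distinct points and all indices α, β ∈ {1,…,k}, if h := √( ∥y₁'−y₁∥² + ⋯ + ∥y_k'−y_k∥² + ∥y_{k+1}'−y_α∥² + ∥y_{k+2}'−y_β∥² ) < δ, then |ρ_{Y'} − ρ_Y| ≤ C·h. -/

import Mathlib

open Metric
open scoped RealInnerProductSpace

noncomputable section

def TriSim {E : Type*} [NormedAddCommGroup E] [InnerProductSpace ℝ E] (a b c : E) : Prop :=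
  ‖a - c‖ ^ 2 + (1 / 2) * (‖a - b‖ ^ 2 * ‖b - c‖ ^ 2) ≤ ‖a - b‖ ^ 2 + ‖b - c‖ ^ 2

def IsCircum {E : Type*} [NormedAddCommGroup E] [InnerProductSpace ℝ E]
    (Y : Set E) (c : E) (ρ : ℝ) : Prop :=
  c ∈ affineSpan ℝ Y ∧ ∀ y ∈ Y, dist c y = ρ

open Classical in
open Classical in
noncomputable def circumData {E : Type*} [NormedAddCommGroup E] [InnerProductSpace ℝ E]
    (Y : Set E) : E × ℝ :=
  if h : ∃ p : E × ℝ, IsCircum Y p.1 p.2 ∧ 0 ≤ p.2 then h.choose else (0, 0)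

noncomputable def circumradius {E : Type*} [NormedAddCommGroup E] [InnerProductSpace ℝ E]
    (Y : Set E) : ℝ := (circumData Y).2

def IsSimEmb {E : Type*} [NormedAddCommGroup E] [InnerProductSpace ℝ E] (Y : Set E) : Prop :=
  Y.Finite ∧ AffineIndependent ℝ ((↑) : Y → E) ∧
    (∀ y ∈ Y, ∀ y' ∈ Y, ‖y - y'‖ ^ 2 < 2) ∧
    circumradius Y < 1 ∧
    ∀ a ∈ Y, ∀ b ∈ Y, ∀ c ∈ Y, TriSim a b c

section Aux

variable {E : Type*} [NormedAddCommGroup E] [InnerProductSpace ℝ E]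

/-- The inner-product form of the tri-similarity inequality: the "angle" at `b`. -/
lemma triSim_inner {a b c : E} (h : TriSim a b c) :
    (1/4) * (‖b - a‖ ^ 2 * ‖b - c‖ ^ 2) ≤ ⟪b - a, b - c⟫ := by
  have hex : a - c = (a - b) + (b - c) := by abel
  have hn : ‖a - c‖ ^ 2 = ‖a - b‖ ^ 2 + 2 * ⟪a - b, b - c⟫ + ‖b - c‖ ^ 2 := by
    rw [hex, norm_add_sq_real]
  have h1 : ⟪a - b, b - c⟫ = - ⟪b - a, b - c⟫ := by
    rw [show a - b = -(b-a) by abel, inner_neg_left]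
  have h2 : ‖a - b‖ = ‖b - a‖ := norm_sub_rev _ _
  unfold TriSim at h
  rw [hn, h1, h2] at h
  nlinarith [h]

/-- AffineIndependent transfer from the subtype to an injective family. -/
lemma affineIndependent_of_range {ι : Type*} {p : ι → E} (hinj : Function.Injective p)
    (h : AffineIndependent ℝ ((↑) : Set.range p → E)) : AffineIndependent ℝ p := by
  have : p = ((↑) : Set.range p → E) ∘ (Equiv.ofInjective p hinj) := by
    funext i; rfl
  rw [this]
  exact h.comp_embedding (Equiv.ofInjective p hinj).toEmbedding

lemma circumData_spec {ι : Type*} [Nonempty ι] [Finite ι] {p : ι → E}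
    (ha : AffineIndependent ℝ p) :
    IsCircum (Set.range p) (circumData (Set.range p)).1 (circumData (Set.range p)).2 ∧
      0 ≤ (circumData (Set.range p)).2 := by
  obtain ⟨cs, ⟨hcmem, hsub⟩, -⟩ := ha.existsUnique_dist_eq
  have hex : ∃ q : E × ℝ, IsCircum (Set.range p) q.1 q.2 ∧ 0 ≤ q.2 := by
    refine ⟨(cs.center, cs.radius), ⟨hcmem, ?_⟩, ?_⟩
    · intro x hx
      have := hsub hx
      rw [EuclideanGeometry.Sphere.mem_coe, EuclideanGeometry.mem_sphere] at this
      rw [dist_comm]; exact this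
    · obtain ⟨i⟩ := (inferInstance : Nonempty ι)
      have := hsub (Set.mem_range_self i)
      rw [EuclideanGeometry.Sphere.mem_coe, EuclideanGeometry.mem_sphere] at this
      rw [← this]; exact dist_nonneg
  rw [circumData, dif_pos hex]
  exact hex.choose_spec

end Aux

section Aux2
variable {E : Type*} [NormedAddCommGroup E] [InnerProductSpace ℝ E]

lemma inner_decomp {a b c a' b' c' : E} (hab' : ⟪a,b'⟫ = 0) (hac' : ⟪a,c'⟫ = 0)
    (hba' : ⟪b,a'⟫ = 0) (hbc' : ⟪b,c'⟫ = 0) (hca' : ⟪c,a'⟫ = 0) (hcb' : ⟪c,b'⟫ = 0) :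
    ⟪a+b+c, a'+b'+c'⟫ = ⟪a,a'⟫ + ⟪b,b'⟫ + ⟪c,c'⟫ := by
  simp [inner_add_left, inner_add_right, hab', hac', hba', hbc', hca', hcb']

lemma pos_of_sq {A b B : ℝ} (hb : 0 ≤ b) (hB : b < B) (h1 : -b ≤ A) (h2 : B^2 ≤ A^2) :
    B ≤ A := by
  nlinarith [h1, h2, hb, hB]

end Aux2

set_option maxHeartbeats 2000000 in
/-- For a similarity embedding `Y = {y₁,…,y_k} ⊂ ℝ^{k+1}` with `k` distinct points, there
are constants `C, δ > 0` depending only on `Y` such that for every similarity embedding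
`Y' = {y₁',…,y_{k+2}'} ⊂ ℝ^{k+1}` with `k+2` distinct points and all `α, β ∈ {1,…,k}`,
if `h = √(Σᵢ ‖yᵢ'−yᵢ‖² + ‖y_{k+1}'−y_α‖² + ‖y_{k+2}'−y_β‖²) < δ` then
`|ρ_{Y'} − ρ_Y| ≤ C·h`. -/
theorem circumradius_lipschitz_of_simEmb
    (k : ℕ) (hk : 0 < k) (y : Fin k → EuclideanSpace ℝ (Fin (k + 1)))
    (hinj : Function.Injective y) (hY : IsSimEmb (Set.range y)) :
    ∃ C > (0 : ℝ), ∃ δ > (0 : ℝ),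
      ∀ y' : Fin (k + 2) → EuclideanSpace ℝ (Fin (k + 1)),
        Function.Injective y' → IsSimEmb (Set.range y') →
        ∀ α β : Fin k,
          Real.sqrt ((∑ i : Fin k, ‖y' (Fin.castAdd 2 i) - y i‖ ^ 2)
              + ‖y' ⟨k, by omega⟩ - y α‖ ^ 2 + ‖y' ⟨k + 1, by omega⟩ - y β‖ ^ 2) < δ →
          |circumradius (Set.range y') - circumradius (Set.range y)|
            ≤ C * Real.sqrt ((∑ i : Fin k, ‖y' (Fin.castAdd 2 i) - y i‖ ^ 2)
              + ‖y' ⟨k, by omega⟩ - y α‖ ^ 2 + ‖y' ⟨k + 1, by omega⟩ - y β‖ ^ 2) := by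
  classical
  have hNE : Nonempty (Fin k) := ⟨⟨0, hk⟩⟩
  have hYaff : AffineIndependent ℝ y := affineIndependent_of_range hinj hY.2.1
  obtain ⟨⟨hcmem, hcdist⟩, hρ0⟩ := circumData_spec hYaff
  set c : EuclideanSpace ℝ (Fin (k+1)) := (circumData (Set.range y)).1 with hc_def
  set ρ : ℝ := (circumData (Set.range y)).2 with hρ_def
  have hρ1 : ρ < 1 := hY.2.2.2.1
  have hcr : circumradius (Set.range y) = ρ := rfl
  clear_value c ρ
  set i0 : Fin k := ⟨0, hk⟩ with hi0
  set V : Submodule ℝ (EuclideanSpace ℝ (Fin (k+1))) := vectorSpan ℝ (Set.range y) with hV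
  -- chords are in V
  have hchord : ∀ j : Fin k, y j - y i0 ∈ V := by
    intro j
    exact
      vsub_mem_vectorSpan ℝ (Set.mem_range_self j) (Set.mem_range_self i0)
  -- conditioning constant
  set T : V →ₗ[ℝ] (Fin k → ℝ) :=
    LinearMap.pi (fun j => ((innerSL ℝ (y j - y i0)).toLinearMap).comp V.subtype) with hT
  have hTinj : LinearMap.ker T = ⊥ := by
    rw [LinearMap.ker_eq_bot']
    intro v hv
    have hcomp : ∀ j : Fin k, ⟪y j - y i0, (v : EuclideanSpace ℝ (Fin (k+1)))⟫ = 0 := by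
      intro j
      exact congrFun hv j
    have hvO : (v : EuclideanSpace ℝ (Fin (k+1))) ∈ Vᗮ := by
      show (v : EuclideanSpace ℝ (Fin (k+1))) ∈ (vectorSpan ℝ (Set.range y))ᗮ
      rw [vectorSpan_range_eq_span_range_vsub_right ℝ y i0]
      rw [Submodule.mem_orthogonal]
      intro u hu
      induction hu using Submodule.span_induction with
      | mem x hx =>
          obtain ⟨j, rfl⟩ := hx
          simpa [vsub_eq_sub] using hcomp j
      | zero => simp
      | add x y hx hy hx' hy' => simp [inner_add_left, hx', hy']
      | smul t x hx hx' => simp [inner_smul_left, hx']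
    have : (v : EuclideanSpace ℝ (Fin (k+1))) = 0 := by
      have := (Submodule.mem_orthogonal _ _).1 hvO _ v.2
      rwa [real_inner_self_eq_norm_sq, pow_eq_zero_iff (by norm_num), norm_eq_zero] at this
    exact Subtype.ext this
  obtain ⟨K, hK0, hKanti⟩ := T.exists_antilipschitzWith hTinj
  set Kr : ℝ := max (K : ℝ) 1 with hKr
  have hKr1 : (1:ℝ) ≤ Kr := le_max_right _ _
  have hKr0 : (0:ℝ) < Kr := lt_of_lt_of_le one_pos hKr1
  -- conditioning: vectors of V are controlled by their inner products with the chords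
  have hcond : ∀ v : EuclideanSpace ℝ (Fin (k+1)), v ∈ V → ∀ B : ℝ, (∀ j : Fin k, |⟪y j - y i0, v⟫| ≤ B) →
      ‖v‖ ≤ Kr * B := by
    intro v hvV B hB
    have hB0 : 0 ≤ B := le_trans (abs_nonneg _) (hB i0)
    set v' : V := ⟨v, hvV⟩ with hv'
    have h1 : ‖T v'‖ ≤ B := by
      rw [pi_norm_le_iff_of_nonneg hB0]
      intro j
      have hrfl : T v' j = ⟪y j - y i0, v⟫ := rfl
      rw [hrfl, Real.norm_eq_abs]
      exact hB j
    have h2 : ‖v'‖ ≤ (K : ℝ) * ‖T v'‖ := by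
      have := hKanti.le_mul_dist v' 0
      simpa [dist_eq_norm, map_zero] using this
    have h3 : ‖v‖ = ‖v'‖ := rfl
    calc ‖v‖ ≤ (K:ℝ) * ‖T v'‖ := by rw [h3]; exact h2
      _ ≤ Kr * B := by
          apply mul_le_mul (le_max_left _ _) h1 (norm_nonneg _) (le_of_lt hKr0)
  -- transfer of inner products to the orthogonal projection
  have hprojinner : ∀ u : EuclideanSpace ℝ (Fin (k+1)), ∀ j : Fin k,
      ⟪y j - y i0, (V.orthogonalProjectionOnto u : EuclideanSpace ℝ (Fin (k+1)))⟫ = ⟪y j - y i0, u⟫ := by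
    intro u j
    have h0 := Submodule.starProjection_inner_eq_zero u (y j - y i0) (hchord j)
    have h1 : ⟪y j - y i0, u - (V.orthogonalProjectionOnto u : EuclideanSpace ℝ (Fin (k+1)))⟫ = 0 := by
      rw [real_inner_comm]; exact h0
    rw [inner_sub_right] at h1
    linarith only [h1]
  -- minimal distance constant
  set Dmin : ℝ := Finset.univ.inf' Finset.univ_nonempty
      (fun ij : Fin k × Fin k => if ij.1 = ij.2 then 1 else ‖y ij.1 - y ij.2‖) with hDmin
  have hDmin_pos : 0 < Dmin := by
    rw [hDmin, Finset.lt_inf'_iff]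
    rintro ⟨i, j⟩ -
    by_cases hij : i = j
    · simp [hij]
    · simp only [if_neg hij]
      exact norm_pos_iff.2 (sub_ne_zero.2 fun hcon => hij (hinj hcon))
  have hDmin_le_one : Dmin ≤ 1 := by
    have := Finset.inf'_le (fun ij : Fin k × Fin k =>
      if ij.1 = ij.2 then 1 else ‖y ij.1 - y ij.2‖) (Finset.mem_univ (i0, i0))
    exact le_trans this (by norm_num)
  have hDmin_le : ∀ i j : Fin k, i ≠ j → Dmin ≤ ‖y i - y j‖ := by
    intro i j hij
    have := Finset.inf'_le (fun ij : Fin k × Fin k =>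
      if ij.1 = ij.2 then 1 else ‖y ij.1 - y ij.2‖) (Finset.mem_univ (i, j))
    exact le_trans this (le_of_eq (if_neg hij))
  -- the constants
  set K₁ : ℝ := 3 * Kr with hK₁
  set K₂ : ℝ := 3 + K₁^2 + 2*K₁ with hK₂
  set K₃ : ℝ := 8 * Kr with hK₃
  set K₄ : ℝ := 2 + 4 * K₃ with hK₄
  set C₂ : ℝ := 8 * K₄ / Dmin with hC₂
  set C : ℝ := 2*(K₂ + C₂^2)/Dmin + (K₁ + C₂ + 1) + 1 with hC
  set δ : ℝ := min 1 (min (Dmin/4) (Dmin/(8*K₃))) with hδ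
  have hK₁0 : 0 < K₁ := by rw [hK₁]; linarith only [hKr0]
  have hK₂0 : 0 < K₂ := by rw [hK₂]; nlinarith only [hK₁0, sq_nonneg K₁]
  have hK₃0 : 0 < K₃ := by rw [hK₃]; linarith only [hKr0]
  have hK₄0 : 0 < K₄ := by rw [hK₄]; linarith only [hK₃0]
  have hC₂0 : 0 < C₂ := by
    rw [hC₂]; exact div_pos (by linarith only [hK₄0]) hDmin_pos
  have hCterm : (0:ℝ) ≤ 2*(K₂ + C₂^2)/Dmin := by
    apply div_nonneg ?_ hDmin_pos.le
    nlinarith only [hK₂0, sq_nonneg C₂]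
  have hδ0 : 0 < δ := by
    rw [hδ]
    apply lt_min one_pos
    apply lt_min (by linarith only [hDmin_pos])
    exact div_pos hDmin_pos (by linarith only [hK₃0])
  have hC0 : 0 < C := by rw [hC]; nlinarith only [hCterm, hK₁0, hC₂0]
  clear_value Kr K₁ K₂ K₃ K₄ C₂ C δ
  refine ⟨C, hC0, δ, hδ0, ?_⟩
  intro y' hinj' hY' α β hlt
  have hNE2 : Nonempty (Fin (k+2)) := ⟨⟨0, by omega⟩⟩
  have hY'aff : AffineIndependent ℝ y' := affineIndependent_of_range hinj' hY'.2.1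
  obtain ⟨⟨hcmem', hcdist'⟩, hρ0'⟩ := circumData_spec hY'aff
  set c' : EuclideanSpace ℝ (Fin (k+1)) := (circumData (Set.range y')).1 with hc'_def
  set ρ' : ℝ := (circumData (Set.range y')).2 with hρ'_def
  have hρ1' : ρ' < 1 := hY'.2.2.2.1
  have hcr' : circumradius (Set.range y') = ρ' := rfl
  clear_value c' ρ'
  set bI : Fin (k+2) := ⟨k, by omega⟩ with hbIdef
  set gI : Fin (k+2) := ⟨k+1, by omega⟩ with hgIdef
  set S : ℝ := (∑ i : Fin k, ‖y' (Fin.castAdd 2 i) - y i‖ ^ 2)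
      + ‖y' bI - y α‖ ^ 2 + ‖y' gI - y β‖ ^ 2 with hS
  set h : ℝ := Real.sqrt S with hh
  have hlt' : h < δ := hlt
  show |circumradius (Set.range y') - circumradius (Set.range y)| ≤ C * h
  have hS0 : 0 ≤ S := by rw [hS]; positivity
  have h0 : 0 ≤ h := by rw [hh]; exact Real.sqrt_nonneg _
  have hsq : h^2 = S := by rw [hh]; exact Real.sq_sqrt hS0
  clear_value S h
  have hδ1 : δ ≤ 1 := by rw [hδ]; exact min_le_left _ _
  have hh1 : h ≤ 1 := le_trans (le_of_lt hlt') hδ1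
  have hhD4 : h ≤ Dmin/4 := by
    refine le_trans hlt'.le ?_
    rw [hδ]; exact le_trans (min_le_right _ _) (min_le_left _ _)
  have hhK₃ : K₃ * h ≤ Dmin/8 := by
    have h1 : h ≤ Dmin/(8*K₃) := by
      refine le_trans hlt'.le ?_
      rw [hδ]; exact le_trans (min_le_right _ _) (min_le_right _ _)
    calc K₃ * h ≤ K₃ * (Dmin/(8*K₃)) := by
          exact mul_le_mul_of_nonneg_left h1 hK₃0.le
      _ = Dmin/8 := by field_simp
  -- componentwise bounds
  have hsqle : ∀ t : ℝ, t^2 ≤ S → 0 ≤ t → t ≤ h := by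
    intro t ht h0t
    rw [hh, show t = Real.sqrt (t^2) by rw [Real.sqrt_sq h0t]]
    exact Real.sqrt_le_sqrt ht
  have hbound : ∀ i : Fin k, ‖y' (Fin.castAdd 2 i) - y i‖ ≤ h := by
    intro i
    apply hsqle _ ?_ (norm_nonneg _)
    rw [hS]
    have hterm : ‖y' (Fin.castAdd 2 i) - y i‖^2 ≤ ∑ i : Fin k, ‖y' (Fin.castAdd 2 i) - y i‖ ^ 2 :=
      Finset.single_le_sum (f := fun i : Fin k => ‖y' (Fin.castAdd 2 i) - y i‖^2)
        (fun _ _ => by positivity) (Finset.mem_univ i)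
    linarith only [hterm, sq_nonneg ‖y' bI - y α‖, sq_nonneg ‖y' gI - y β‖]
  have hboundb : ‖y' bI - y α‖ ≤ h := by
    apply hsqle _ ?_ (norm_nonneg _)
    rw [hS]
    have : (0:ℝ) ≤ ∑ i : Fin k, ‖y' (Fin.castAdd 2 i) - y i‖ ^ 2 := by positivity
    linarith only [this, sq_nonneg ‖y' gI - y β‖]
  have hboundg : ‖y' gI - y β‖ ≤ h := by
    apply hsqle _ ?_ (norm_nonneg _)
    rw [hS]
    have : (0:ℝ) ≤ ∑ i : Fin k, ‖y' (Fin.castAdd 2 i) - y i‖ ^ 2 := by positivity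
    linarith only [this, sq_nonneg ‖y' bI - y α‖]
  -- h is positive
  have hbIne : Fin.castAdd 2 α ≠ bI := by
    intro hcon
    have := congrArg Fin.val hcon
    simp [hbIdef] at this
    omega
  have hpos : 0 < h := by
    rcases eq_or_lt_of_le h0 with he | hl
    · exfalso
      have h1 : y' (Fin.castAdd 2 α) = y α := by
        have h2 := hbound α
        rw [← he] at h2
        rw [← sub_eq_zero]
        exact norm_le_zero_iff.1 h2
      have h2 : y' bI = y α := by
        have h3 := hboundb
        rw [← he] at h3
        rw [← sub_eq_zero]
        exact norm_le_zero_iff.1 h3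
      exact hbIne (hinj' (h1.trans h2.symm))
    · exact hl
  -- tri-similarity in inner-product form, and the sphere conditions
  have hIN : ∀ i j l : Fin (k+2),
      (1/4) * (‖y' j - y' i‖^2 * ‖y' j - y' l‖^2) ≤ ⟪y' j - y' i, y' j - y' l⟫ :=
    fun i j l => triSim_inner (hY'.2.2.2.2 _ (Set.mem_range_self i) _ (Set.mem_range_self j)
      _ (Set.mem_range_self l))
  have hsph : ∀ i : Fin (k+2), ‖c' - y' i‖ = ρ' := by
    intro i; rw [← dist_eq_norm]; exact hcdist' _ (Set.mem_range_self i)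
  -- decomposition of the circumcenter of Y'
  set q : EuclideanSpace ℝ (Fin (k+1)) := c' - y i0 with hq
  set vstar : EuclideanSpace ℝ (Fin (k+1)) :=
    (V.orthogonalProjectionOnto q : EuclideanSpace ℝ (Fin (k+1))) with hvstar
  have hvV : vstar ∈ V := SetLike.coe_mem _
  set z : EuclideanSpace ℝ (Fin (k+1)) := q - vstar with hz
  have hzO : z ∈ Vᗮ := Submodule.sub_starProjection_mem_orthogonal q
  set d : ℝ := ‖z‖ with hd_def
  have hd0 : 0 ≤ d := norm_nonneg _
  set p : EuclideanSpace ℝ (Fin (k+1)) := y i0 + vstar with hp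
  have hc'pz : c' = p + z := by rw [hp, hz, hq]; abel
  have hzO' : z = q - vstar := hz
  clear_value q vstar z d p
  have hq_le : ‖q‖ ≤ ρ' + h := by
    calc ‖q‖ = ‖(c' - y' (Fin.castAdd 2 i0)) + (y' (Fin.castAdd 2 i0) - y i0)‖ := by
          rw [hq]; congr 1; abel
      _ ≤ ‖c' - y' (Fin.castAdd 2 i0)‖ + ‖y' (Fin.castAdd 2 i0) - y i0‖ := norm_add_le _ _
      _ ≤ ρ' + h := add_le_add (le_of_eq (hsph _)) (hbound i0)
  have hvz_orth : ⟪vstar, z⟫ = 0 :=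
    (Submodule.mem_orthogonal _ _).1 hzO _ hvV
  have hqdec : q = vstar + z := by rw [hz]; abel
  have hpyth0 : ‖q‖^2 = ‖vstar‖^2 + d^2 := by
    rw [hqdec, norm_add_sq_real, hvz_orth, hd_def]; ring
  have hvstar_le : ‖vstar‖ ≤ ρ' + h := by
    nlinarith only [hpyth0, norm_nonneg vstar, norm_nonneg q, hq_le, hρ0', h0, sq_nonneg d]
  have hyc : ∀ i : Fin k, ‖c - y i‖ = ρ := fun i => by
    rw [← dist_eq_norm]; exact hcdist _ (Set.mem_range_self i)
  have hychord : ∀ i j : Fin k, ‖y i - y j‖ ≤ 2 := by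
    intro i j
    calc ‖y i - y j‖ = ‖(c - y j) - (c - y i)‖ := by congr 1; abel
      _ ≤ ‖c - y j‖ + ‖c - y i‖ := norm_sub_le _ _
      _ ≤ 2 := by rw [hyc, hyc]; linarith only [hρ1, hρ0]
  -- Pythagoras with errors
  have hA : ∀ i : Fin k, |d^2 + ‖p - y i‖^2 - ρ'^2| ≤ 3*h := by
    intro i
    have h1 : c' - y i = z + (p - y i) := by rw [hc'pz]; abel
    have hpyV : p - y i ∈ V := by
      have h2 : p - y i = vstar - (y i - y i0) := by rw [hp]; abel
      rw [h2]; exact Submodule.sub_mem _ hvV (hchord i)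
    have h2 : ⟪z, p - y i⟫ = 0 := by
      rw [real_inner_comm]
      exact (Submodule.mem_orthogonal _ _).1 hzO _ hpyV
    have h3 : ‖c' - y i‖^2 = d^2 + ‖p - y i‖^2 := by
      rw [h1, norm_add_sq_real, h2, hd_def]; ring
    have habs : |‖c' - y i‖ - ρ'| ≤ h := by
      have h4 := abs_norm_sub_norm_le (c' - y i) (c' - y' (Fin.castAdd 2 i))
      rw [hsph] at h4
      calc |‖c' - y i‖ - ρ'| ≤ ‖(c' - y i) - (c' - y' (Fin.castAdd 2 i))‖ := h4
        _ = ‖y' (Fin.castAdd 2 i) - y i‖ := by congr 1; abel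
        _ ≤ h := hbound i
    have h5 := abs_le.1 habs
    rw [abs_le]
    constructor <;>
      nlinarith only [h3, norm_nonneg (c' - y i), hρ0', hρ1', hh1, h0, h5.1, h5.2]
  -- the projected center is close to the circumcenter of Y
  have hcV : c - y i0 ∈ V := by
    have h1 := AffineSubspace.vsub_mem_direction hcmem
      (mem_affineSpan ℝ (Set.mem_range_self i0))
    rw [direction_affineSpan] at h1
    simpa [vsub_eq_sub] using h1
  have hpcV : p - c ∈ V := by
    have h1 : p - c = vstar - (c - y i0) := by rw [hp]; abel
    rw [h1]; exact Submodule.sub_mem _ hvV hcV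
  have hAexp : ∀ i : Fin k, ‖p - y i‖^2 = ‖p-c‖^2 + 2*⟪p-c, c-y i⟫ + ρ^2 := by
    intro i
    have h1 : p - y i = (p - c) + (c - y i) := by abel
    rw [h1, norm_add_sq_real, hyc]
  have hpc : ‖p - c‖ ≤ K₁ * h := by
    have hcomp : ∀ j : Fin k, |⟪y j - y i0, p - c⟫| ≤ 3*h := by
      intro j
      have e1 : ⟪y j - y i0, p - c⟫ = ⟪p - c, c - y i0⟫ - ⟪p - c, c - y j⟫ := by
        rw [real_inner_comm, ← inner_sub_right]
        congr 1
        abel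
      have f0 := abs_le.1 (hA i0)
      have fj := abs_le.1 (hA j)
      have g0 := hAexp i0
      have gj := hAexp j
      rw [abs_le]
      constructor <;> linarith only [e1, g0, gj, f0.1, f0.2, fj.1, fj.2]
    have h1 := hcond (p-c) hpcV (3*h) hcomp
    calc ‖p-c‖ ≤ Kr * (3*h) := h1
      _ = K₁ * h := by rw [hK₁]; ring
  -- main radius estimate, apart from the normal offset d
  have hmain : |ρ'^2 - ρ^2 - d^2| ≤ K₂*h := by
    have f0 := abs_le.1 (hA i0)
    have g0 := hAexp i0
    have hcy : ‖c - y i0‖ = ρ := hyc i0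
    have hip : |⟪p-c, c-y i0⟫| ≤ K₁*h := by
      calc |⟪p-c, c-y i0⟫| ≤ ‖p-c‖*‖c-y i0‖ := abs_real_inner_le_norm _ _
        _ ≤ (K₁*h)*1 := by
            apply mul_le_mul hpc ?_ (norm_nonneg _) (by positivity)
            rw [hcy]; linarith only [hρ1]
        _ = K₁*h := mul_one _
    have hip' := abs_le.1 hip
    have hpc2 : ‖p-c‖^2 ≤ (K₁*h)^2 := by
      nlinarith only [norm_nonneg (p-c), hpc]
    have hhh : h*h ≤ h := mul_le_of_le_one_right h0 hh1
    have hK₁0 : 0 < K₁ := by rw [hK₁]; positivity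
    rw [abs_le]
    constructor <;>
      nlinarith only [hK₂, hpc2, hip'.1, hip'.2, g0, f0.1, f0.2, sq_nonneg ‖p-c‖, hhh, hK₁0.le,
        sq_nonneg K₁, h0]
  -- the key estimate: the normal offset is O(h)
  have hd : d ≤ C₂ * h := by
    by_contra hcon
    push_neg at hcon
    have hdpos : 0 < d := lt_trans (mul_pos hC₂0 hpos) hcon
    have hd2pos : (0:ℝ) < d^2 := by positivity
    have hzne : z ≠ 0 := by
      intro h0z
      rw [h0z, norm_zero] at hd_def
      rw [hd_def] at hdpos
      exact lt_irrefl 0 hdpos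
    -- sharp windows from the tri-similarity inequality
    have hWup : ∀ iP iQ fI : Fin (k+2),
        ⟪y' iQ - y' iP, y' iP - y' fI⟫
          ≤ -(1/4) * (‖y' iQ - y' iP‖^2 * ‖y' iP - y' fI‖^2) := by
      intro iP iQ fI
      have h1 := hIN iQ iP fI
      have h2 : y' iP - y' iQ = -(y' iQ - y' iP) := by abel
      rw [h2, inner_neg_left, norm_neg] at h1
      linarith only [h1]
    have hWlo : ∀ iP iQ fI : Fin (k+2),
        -(‖y' iQ - y' iP‖^2) + (1/4) * (‖y' iQ - y' iP‖^2 * ‖y' iQ - y' fI‖^2)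
          ≤ ⟪y' iQ - y' iP, y' iP - y' fI⟫ := by
      intro iP iQ fI
      have h1 := hIN iP iQ fI
      have h3 : ⟪y' iQ - y' iP, y' iQ - y' fI⟫
          = ⟪y' iQ - y' iP, y' iQ - y' iP⟫ + ⟪y' iQ - y' iP, y' iP - y' fI⟫ := by
        rw [← inner_add_right]
        congr 1
        abel
      rw [h3, real_inner_self_eq_norm_sq] at h1
      linarith only [h1]
    have hWabs : ∀ iP iQ fI : Fin (k+2),
        |⟪y' iQ - y' iP, y' iP - y' fI⟫| ≤ ‖y' iQ - y' iP‖^2 := by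
      intro iP iQ fI
      rw [abs_le]
      constructor
      · have := hWlo iP iQ fI
        nlinarith only [this, sq_nonneg ‖y' iQ - y' iP‖, sq_nonneg ‖y' iQ - y' fI‖]
      · have := hWup iP iQ fI
        nlinarith only [this, sq_nonneg ‖y' iQ - y' iP‖, sq_nonneg ‖y' iP - y' fI‖]
    -- per-pair estimates
    have pairfact : ∀ iP iQ : Fin (k+2), ∀ γ : Fin k, ‖y' iP - y γ‖ ≤ h →
        ‖y' iQ - y' iP‖ ≤ 2*h →
        ‖(V.orthogonalProjectionOnto (y' iQ - y' iP) : EuclideanSpace ℝ (Fin (k+1)))‖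
            ≤ (Dmin/8) * ‖y' iQ - y' iP‖ ∧
        |⟪y' iQ - y' iP, z⟫| ≤ (Dmin/8) * (d * ‖y' iQ - y' iP‖) := by
      intro iP iQ γ hanch hu2
      have hcomp1 : ∀ j : Fin k, |⟪y' iQ - y' iP, y γ - y j⟫| ≤ 4*(h*‖y' iQ - y' iP‖) := by
        intro j
        have e1 : y γ - y j = (y γ - y' iP) + (y' iP - y' (Fin.castAdd 2 j))
            + (y' (Fin.castAdd 2 j) - y j) := by abel
        rw [e1, inner_add_right, inner_add_right]
        have b1 : |⟪y' iQ - y' iP, y γ - y' iP⟫| ≤ ‖y' iQ - y' iP‖ * h := by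
          calc |⟪y' iQ - y' iP, y γ - y' iP⟫| ≤ ‖y' iQ - y' iP‖ * ‖y γ - y' iP‖ :=
                abs_real_inner_le_norm _ _
            _ ≤ ‖y' iQ - y' iP‖ * h := by
                apply mul_le_mul_of_nonneg_left ?_ (norm_nonneg _)
                rw [norm_sub_rev]; exact hanch
        have b2 := hWabs iP iQ (Fin.castAdd 2 j)
        have b3 : |⟪y' iQ - y' iP, y' (Fin.castAdd 2 j) - y j⟫| ≤ ‖y' iQ - y' iP‖ * h := by
          calc |⟪y' iQ - y' iP, y' (Fin.castAdd 2 j) - y j⟫|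
              ≤ ‖y' iQ - y' iP‖ * ‖y' (Fin.castAdd 2 j) - y j‖ := abs_real_inner_le_norm _ _
            _ ≤ ‖y' iQ - y' iP‖ * h :=
                mul_le_mul_of_nonneg_left (hbound j) (norm_nonneg _)
        have b4 : ‖y' iQ - y' iP‖^2 ≤ 2*h*‖y' iQ - y' iP‖ := by
          nlinarith only [hu2, norm_nonneg (y' iQ - y' iP)]
        have t1 := abs_add_le (⟪y' iQ - y' iP, y γ - y' iP⟫
          + ⟪y' iQ - y' iP, y' iP - y' (Fin.castAdd 2 j)⟫)
          ⟪y' iQ - y' iP, y' (Fin.castAdd 2 j) - y j⟫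
        have t2 := abs_add_le ⟪y' iQ - y' iP, y γ - y' iP⟫
          ⟪y' iQ - y' iP, y' iP - y' (Fin.castAdd 2 j)⟫
        linarith only [t1, t2, b1, b2, b3, b4]
      have hcomp2 : ∀ j : Fin k, |⟪y j - y i0, y' iQ - y' iP⟫| ≤ 8*(h*‖y' iQ - y' iP‖) := by
        intro j
        have e1 : ⟪y' iQ - y' iP, y j - y i0⟫
            = ⟪y' iQ - y' iP, y γ - y i0⟫ - ⟪y' iQ - y' iP, y γ - y j⟫ := by
          rw [← inner_sub_right]
          congr 1
          abel
        have b1 := hcomp1 i0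
        have b2 := hcomp1 j
        rw [real_inner_comm, e1]
        have t1 := abs_sub ⟪y' iQ - y' iP, y γ - y i0⟫ ⟪y' iQ - y' iP, y γ - y j⟫
        linarith only [t1, b1, b2]
      have hproj3 : ‖(V.orthogonalProjectionOnto (y' iQ - y' iP) :
          EuclideanSpace ℝ (Fin (k+1)))‖ ≤ (K₃ * h) * ‖y' iQ - y' iP‖ := by
        have hmem : (V.orthogonalProjectionOnto (y' iQ - y' iP) :
            EuclideanSpace ℝ (Fin (k+1))) ∈ V := SetLike.coe_mem _
        have hc1 := hcond _ hmem (8*(h*‖y' iQ - y' iP‖)) (by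
          intro j
          rw [hprojinner]
          exact hcomp2 j)
        calc ‖(V.orthogonalProjectionOnto (y' iQ - y' iP) : EuclideanSpace ℝ (Fin (k+1)))‖
            ≤ Kr * (8*(h*‖y' iQ - y' iP‖)) := hc1
          _ = (K₃ * h) * ‖y' iQ - y' iP‖ := by rw [hK₃]; ring
      have hproj8 : ‖(V.orthogonalProjectionOnto (y' iQ - y' iP) :
          EuclideanSpace ℝ (Fin (k+1)))‖ ≤ (Dmin/8) * ‖y' iQ - y' iP‖ :=
        le_trans hproj3 (mul_le_mul_of_nonneg_right hhK₃ (norm_nonneg _))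
      refine ⟨hproj8, ?_⟩
      -- z-component bound
      have hsph1 : ⟪y' iQ - y' iP, y' iP - c'⟫ = -(1/2) * ‖y' iQ - y' iP‖^2 := by
        have e1 : ‖c' - y' iQ‖^2 = ‖c' - y' iP‖^2 := by rw [hsph, hsph]
        have e2 : c' - y' iQ = (c' - y' iP) - (y' iQ - y' iP) := by abel
        rw [e2, norm_sub_sq_real] at e1
        have e4 : y' iP - c' = -(c' - y' iP) := by abel
        rw [e4, inner_neg_right, real_inner_comm]
        linarith only [e1]
      have hwV : y γ - y i0 - vstar ∈ V := Submodule.sub_mem _ (hchord γ) hvV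
      have e6 : ⟪y' iQ - y' iP, z⟫
          = ⟪y' iQ - y' iP, y' iP - y γ⟫ + ⟪y' iQ - y' iP, y γ - y i0 - vstar⟫
            - ⟪y' iQ - y' iP, y' iP - c'⟫ := by
        have e7 : z = (y' iP - y γ) + (y γ - y i0 - vstar) - (y' iP - c') := by
          rw [hc'pz, hp]; abel
        rw [e7, inner_sub_right, inner_add_right]
      have b1 : |⟪y' iQ - y' iP, y' iP - y γ⟫| ≤ ‖y' iQ - y' iP‖ * h := by
        calc |⟪y' iQ - y' iP, y' iP - y γ⟫| ≤ ‖y' iQ - y' iP‖ * ‖y' iP - y γ‖ :=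
            abs_real_inner_le_norm _ _
          _ ≤ ‖y' iQ - y' iP‖ * h := mul_le_mul_of_nonneg_left hanch (norm_nonneg _)
      have b2 : |⟪y' iQ - y' iP, y γ - y i0 - vstar⟫|
          ≤ ((K₃*h) * ‖y' iQ - y' iP‖) * 4 := by
        have e8 : ⟪y' iQ - y' iP, y γ - y i0 - vstar⟫
            = ⟪(V.orthogonalProjectionOnto (y' iQ - y' iP) : EuclideanSpace ℝ (Fin (k+1))),
                y γ - y i0 - vstar⟫ := by
          have e9 : ⟪y γ - y i0 - vstar,
              (y' iQ - y' iP) -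
                (V.orthogonalProjectionOnto (y' iQ - y' iP) : EuclideanSpace ℝ (Fin (k+1)))⟫
              = 0 :=
            (Submodule.mem_orthogonal _ _).1
              (Submodule.sub_starProjection_mem_orthogonal (y' iQ - y' iP)) _ hwV
          rw [inner_sub_right] at e9
          have c1 : ⟪y' iQ - y' iP, y γ - y i0 - vstar⟫
              = ⟪y γ - y i0 - vstar, y' iQ - y' iP⟫ := real_inner_comm _ _
          have c2 : ⟪(V.orthogonalProjectionOnto (y' iQ - y' iP) : EuclideanSpace ℝ (Fin (k+1))),
              y γ - y i0 - vstar⟫ = ⟪y γ - y i0 - vstar,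
              (V.orthogonalProjectionOnto (y' iQ - y' iP) : EuclideanSpace ℝ (Fin (k+1)))⟫ :=
            real_inner_comm _ _
          rw [c1, c2]
          linarith only [e9]
        rw [e8]
        have b3 : ‖y γ - y i0 - vstar‖ ≤ 4 := by
          calc ‖y γ - y i0 - vstar‖ ≤ ‖y γ - y i0‖ + ‖vstar‖ := norm_sub_le _ _
            _ ≤ 2 + (ρ' + h) := add_le_add (hychord γ i0) hvstar_le
            _ ≤ 4 := by linarith only [hρ1', hh1]
        calc |⟪(V.orthogonalProjectionOnto (y' iQ - y' iP) : EuclideanSpace ℝ (Fin (k+1))),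
              y γ - y i0 - vstar⟫|
            ≤ ‖(V.orthogonalProjectionOnto (y' iQ - y' iP) : EuclideanSpace ℝ (Fin (k+1)))‖
              * ‖y γ - y i0 - vstar‖ := abs_real_inner_le_norm _ _
          _ ≤ ((K₃*h) * ‖y' iQ - y' iP‖) * 4 := by
              apply mul_le_mul hproj3 b3 (norm_nonneg _)
              have : (0:ℝ) ≤ K₃ * h := mul_nonneg hK₃0.le h0
              positivity
      have b4 : ‖y' iQ - y' iP‖^2 ≤ 2*h*‖y' iQ - y' iP‖ := by
        nlinarith only [hu2, norm_nonneg (y' iQ - y' iP)]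
      have hK₄d : K₄ * (h * ‖y' iQ - y' iP‖) ≤ (Dmin/8) * (d * ‖y' iQ - y' iP‖) := by
        have e10 : K₄ * Dmin = C₂ * Dmin/8 * Dmin := by
          rw [hC₂]
          field_simp
        have e11 : K₄ = C₂ * Dmin/8 := by
          have := e10
          field_simp at this
          nlinarith only [this, hDmin_pos]
        rw [e11]
        have m1 : (0:ℝ) ≤ (d - C₂*h) * (Dmin * ‖y' iQ - y' iP‖) :=
          mul_nonneg (by linarith only [hcon.le]) (mul_nonneg hDmin_pos.le (norm_nonneg _))
        nlinarith only [m1]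
      have b5 := abs_le.1 b1
      have b6 := abs_le.1 b2
      have btot : h*‖y' iQ - y' iP‖ + ((K₃*h)*‖y' iQ - y' iP‖)*4 + (1/2)*‖y' iQ - y' iP‖^2
          ≤ (Dmin/8)*(d*‖y' iQ - y' iP‖) := by
        have m0 : (0:ℝ) ≤ h*‖y' iQ - y' iP‖ := mul_nonneg h0 (norm_nonneg _)
        nlinarith only [b4, hK₄d, hK₄, m0]
      rw [abs_le, e6, hsph1]
      constructor
      · linarith only [b5.1, b6.1, btot, sq_nonneg ‖y' iQ - y' iP‖]
      · linarith only [b5.2, b6.2, btot, sq_nonneg ‖y' iQ - y' iP‖]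
    -- rank computations : the orthogonal complement of V ⊔ span z is a line
    have hVrank : Module.finrank ℝ V = k - 1 := by
      have hcard : Fintype.card (Fin k) = (k-1) + 1 := by
        rw [Fintype.card_fin]; omega
      exact hYaff.finrank_vectorSpan hcard
    have hErank : Module.finrank ℝ (EuclideanSpace ℝ (Fin (k+1))) = k+1 := by
      simp [finrank_euclideanSpace]
    have hspanz_le : (Submodule.span ℝ {z}) ≤ Vᗮ := by
      rw [Submodule.span_le, Set.singleton_subset_iff]
      exact hzO
    have hinf : V ⊓ Submodule.span ℝ {z} = ⊥ := by
      rw [eq_bot_iff]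
      rintro x hx
      have hx1 : x ∈ V := hx.1
      have hx2 : x ∈ Vᗮ := hspanz_le hx.2
      have hxx : ⟪x, x⟫ = 0 := (Submodule.mem_orthogonal _ _).1 hx2 x hx1
      rw [inner_self_eq_zero] at hxx
      simp [hxx]
    have hzrank : Module.finrank ℝ (Submodule.span ℝ {z}) = 1 := finrank_span_singleton hzne
    have hsuprank : Module.finrank ℝ ↥(V ⊔ Submodule.span ℝ {z}) = k := by
      have hh2 := Submodule.finrank_sup_add_finrank_inf_eq V (Submodule.span ℝ {z})
      rw [hinf, hVrank, hzrank] at hh2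
      simp only [finrank_bot] at hh2
      omega
    have hWrank : Module.finrank ℝ ↥((V ⊔ Submodule.span ℝ {z})ᗮ) = 1 := by
      have hh3 := Submodule.finrank_add_finrank_orthogonal
        (K := V ⊔ Submodule.span ℝ {z})
      rw [hsuprank, hErank] at hh3
      omega
    obtain ⟨e, he0, hegen⟩ := finrank_eq_one_iff'.1 hWrank
    have heE : (0:ℝ) < ‖(e : EuclideanSpace ℝ (Fin (k+1)))‖^2 := by
      have hene : (e : EuclideanSpace ℝ (Fin (k+1))) ≠ 0 := by
        intro hcon2
        exact he0 (Subtype.ext hcon2)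
      exact pow_pos (norm_pos_iff.2 hene) 2
    -- the residual vectors lie in that line
    have hWmem : ∀ u : EuclideanSpace ℝ (Fin (k+1)),
        u - (V.orthogonalProjectionOnto u : EuclideanSpace ℝ (Fin (k+1))) - (⟪u, z⟫/d^2) • z
          ∈ (V ⊔ Submodule.span ℝ {z})ᗮ := by
      intro u
      rw [Submodule.mem_orthogonal]
      intro x hx
      obtain ⟨xv, hxv, xz, hxz, rfl⟩ := Submodule.mem_sup.1 hx
      obtain ⟨s, rfl⟩ := Submodule.mem_span_singleton.1 hxz
      have hzz : ⟪z, z⟫ = d^2 := by rw [real_inner_self_eq_norm_sq, hd_def]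
      have t1 : ⟪xv, u - (V.orthogonalProjectionOnto u : EuclideanSpace ℝ (Fin (k+1)))⟫ = 0 :=
        (Submodule.mem_orthogonal _ _).1 (Submodule.sub_starProjection_mem_orthogonal u) _ hxv
      rw [inner_sub_right] at t1
      have t2 : ⟪xv, z⟫ = 0 := (Submodule.mem_orthogonal _ _).1 hzO _ hxv
      have t3 : ⟪z, (V.orthogonalProjectionOnto u : EuclideanSpace ℝ (Fin (k+1)))⟫ = 0 := by
        rw [real_inner_comm]
        exact (Submodule.mem_orthogonal _ _).1 hzO _ (SetLike.coe_mem _)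
      have t4 : ⟪z, u⟫ = ⟪u, z⟫ := real_inner_comm _ _
      simp only [inner_add_left, inner_sub_right, real_inner_smul_left, real_inner_smul_right]
      rw [t2, t3, t4, hzz]
      have hd2ne : d^2 ≠ 0 := ne_of_gt hd2pos
      have hcancel : ⟪u, z⟫/d^2*(s*d^2) = s*⟪u, z⟫ := by
        field_simp
      rw [hcancel]
      linear_combination t1
    have hdot : ∀ u u' : EuclideanSpace ℝ (Fin (k+1)),
        ⟪u - (V.orthogonalProjectionOnto u : EuclideanSpace ℝ (Fin (k+1))) - (⟪u, z⟫/d^2) • z,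
          u' - (V.orthogonalProjectionOnto u' : EuclideanSpace ℝ (Fin (k+1))) - (⟪u', z⟫/d^2) • z⟫
          = ⟪u, u'⟫ - ⟪(V.orthogonalProjectionOnto u : EuclideanSpace ℝ (Fin (k+1))),
              (V.orthogonalProjectionOnto u' : EuclideanSpace ℝ (Fin (k+1)))⟫
            - ⟪u, z⟫ * ⟪u', z⟫ / d^2 := by
      intro u u'
      have hzz : ⟪z, z⟫ = d^2 := by rw [real_inner_self_eq_norm_sq, hd_def]
      have hAz : ⟪(V.orthogonalProjectionOnto u : EuclideanSpace ℝ (Fin (k+1))), z⟫ = 0 :=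
        (Submodule.mem_orthogonal _ _).1 hzO _ (SetLike.coe_mem _)
      have hA'z : ⟪(V.orthogonalProjectionOnto u' : EuclideanSpace ℝ (Fin (k+1))), z⟫ = 0 :=
        (Submodule.mem_orthogonal _ _).1 hzO _ (SetLike.coe_mem _)
      have hzA : ⟪z, (V.orthogonalProjectionOnto u : EuclideanSpace ℝ (Fin (k+1)))⟫ = 0 := by
        rw [real_inner_comm]; exact hAz
      have hzA' : ⟪z, (V.orthogonalProjectionOnto u' : EuclideanSpace ℝ (Fin (k+1)))⟫ = 0 := by
        rw [real_inner_comm]; exact hA'z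
      have huA' : ⟪u, (V.orthogonalProjectionOnto u' : EuclideanSpace ℝ (Fin (k+1)))⟫
          = ⟪(V.orthogonalProjectionOnto u : EuclideanSpace ℝ (Fin (k+1))),
              (V.orthogonalProjectionOnto u' : EuclideanSpace ℝ (Fin (k+1)))⟫ := by
        have t1 : ⟪(V.orthogonalProjectionOnto u' : EuclideanSpace ℝ (Fin (k+1))),
            u - (V.orthogonalProjectionOnto u : EuclideanSpace ℝ (Fin (k+1)))⟫ = 0 :=
          (Submodule.mem_orthogonal _ _).1 (Submodule.sub_starProjection_mem_orthogonal u) _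
            (SetLike.coe_mem _)
        rw [inner_sub_right] at t1
        have c1 : ⟪u, (V.orthogonalProjectionOnto u' : EuclideanSpace ℝ (Fin (k+1)))⟫
            = ⟪(V.orthogonalProjectionOnto u' : EuclideanSpace ℝ (Fin (k+1))), u⟫ :=
          real_inner_comm _ _
        have c2 : ⟪(V.orthogonalProjectionOnto u : EuclideanSpace ℝ (Fin (k+1))),
            (V.orthogonalProjectionOnto u' : EuclideanSpace ℝ (Fin (k+1)))⟫
            = ⟪(V.orthogonalProjectionOnto u' : EuclideanSpace ℝ (Fin (k+1))),
              (V.orthogonalProjectionOnto u : EuclideanSpace ℝ (Fin (k+1)))⟫ :=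
          real_inner_comm _ _
        rw [c1, c2]
        linarith only [t1]
      have hAu' : ⟪(V.orthogonalProjectionOnto u : EuclideanSpace ℝ (Fin (k+1))), u'⟫
          = ⟪(V.orthogonalProjectionOnto u : EuclideanSpace ℝ (Fin (k+1))),
              (V.orthogonalProjectionOnto u' : EuclideanSpace ℝ (Fin (k+1)))⟫ := by
        have t1 : ⟪(V.orthogonalProjectionOnto u : EuclideanSpace ℝ (Fin (k+1))),
            u' - (V.orthogonalProjectionOnto u' : EuclideanSpace ℝ (Fin (k+1)))⟫ = 0 :=
          (Submodule.mem_orthogonal _ _).1 (Submodule.sub_starProjection_mem_orthogonal u') _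
            (SetLike.coe_mem _)
        rw [inner_sub_right] at t1
        linarith only [t1]
      have hzu' : ⟪z, u'⟫ = ⟪u', z⟫ := real_inner_comm _ _
      simp only [inner_sub_left, inner_sub_right, real_inner_smul_left, real_inner_smul_right]
      rw [hAu', hzu', huA', hzA', hAz, hzz]
      have hd2ne : d^2 ≠ 0 := ne_of_gt hd2pos
      have hc2 : ⟪u', z⟫/d^2 * (⟪u, z⟫/d^2 * d^2) = ⟪u, z⟫ * ⟪u', z⟫ / d^2 := by
        field_simp
      rw [hc2]
      ring
    have hrep : ∀ u : EuclideanSpace ℝ (Fin (k+1)), ∃ t : ℝ,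
        u - (V.orthogonalProjectionOnto u : EuclideanSpace ℝ (Fin (k+1))) - (⟪u, z⟫/d^2) • z
          = t • (e : EuclideanSpace ℝ (Fin (k+1))) := by
      intro u
      obtain ⟨t, ht⟩ := hegen ⟨_, hWmem u⟩
      refine ⟨t, ?_⟩
      have := congrArg (Subtype.val) ht
      simpa using this.symm
    -- lower bound for the residual norms, and cross-term control
    have hwnorm : ∀ u : EuclideanSpace ℝ (Fin (k+1)),
        ‖(V.orthogonalProjectionOnto u : EuclideanSpace ℝ (Fin (k+1)))‖ ≤ (Dmin/8) * ‖u‖ →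
        |⟪u, z⟫| ≤ (Dmin/8) * (d * ‖u‖) →
        (1 - Dmin^2/32) * ‖u‖^2
          ≤ ⟪u - (V.orthogonalProjectionOnto u : EuclideanSpace ℝ (Fin (k+1))) - (⟪u, z⟫/d^2) • z,
              u - (V.orthogonalProjectionOnto u : EuclideanSpace ℝ (Fin (k+1))) - (⟪u, z⟫/d^2) • z⟫
        := by
      intro u hP hz1
      rw [hdot u u, real_inner_self_eq_norm_sq, real_inner_self_eq_norm_sq]
      have e3 : ‖(V.orthogonalProjectionOnto u : EuclideanSpace ℝ (Fin (k+1)))‖^2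
          ≤ (Dmin/8)^2 * ‖u‖^2 := by
        nlinarith only [hP, norm_nonneg (V.orthogonalProjectionOnto u :
          EuclideanSpace ℝ (Fin (k+1))), norm_nonneg u, hDmin_pos.le]
      have e4 : ⟪u, z⟫ * ⟪u, z⟫ / d^2 ≤ (Dmin/8)^2 * ‖u‖^2 := by
        rw [div_le_iff₀ hd2pos]
        nlinarith only [hz1, abs_nonneg ⟪u, z⟫, sq_abs ⟪u, z⟫, hDmin_pos.le, norm_nonneg u,
          hd0]
      nlinarith only [e3, e4, hDmin_le_one, hDmin_pos.le, sq_nonneg ‖u‖]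
    have hwcross : ∀ u u' : EuclideanSpace ℝ (Fin (k+1)),
        ‖(V.orthogonalProjectionOnto u : EuclideanSpace ℝ (Fin (k+1)))‖ ≤ (Dmin/8) * ‖u‖ →
        |⟪u, z⟫| ≤ (Dmin/8) * (d * ‖u‖) →
        ‖(V.orthogonalProjectionOnto u' : EuclideanSpace ℝ (Fin (k+1)))‖ ≤ (Dmin/8) * ‖u'‖ →
        |⟪u', z⟫| ≤ (Dmin/8) * (d * ‖u'‖) →
        |⟪u - (V.orthogonalProjectionOnto u : EuclideanSpace ℝ (Fin (k+1))) - (⟪u, z⟫/d^2) • z,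
            u' - (V.orthogonalProjectionOnto u' : EuclideanSpace ℝ (Fin (k+1))) - (⟪u', z⟫/d^2) • z⟫
          - ⟪u, u'⟫| ≤ (Dmin^2/32) * (‖u‖ * ‖u'‖) := by
      intro u u' hP hz1 hP' hz1'
      rw [hdot u u']
      have c1 : |⟪(V.orthogonalProjectionOnto u : EuclideanSpace ℝ (Fin (k+1))),
          (V.orthogonalProjectionOnto u' : EuclideanSpace ℝ (Fin (k+1)))⟫|
          ≤ (Dmin/8)^2 * (‖u‖ * ‖u'‖) := by
        have c0 := abs_real_inner_le_norm
          (V.orthogonalProjectionOnto u : EuclideanSpace ℝ (Fin (k+1)))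
          (V.orthogonalProjectionOnto u' : EuclideanSpace ℝ (Fin (k+1)))
        nlinarith only [c0, hP, hP', norm_nonneg (V.orthogonalProjectionOnto u :
          EuclideanSpace ℝ (Fin (k+1))), norm_nonneg (V.orthogonalProjectionOnto u' :
          EuclideanSpace ℝ (Fin (k+1))), norm_nonneg u, norm_nonneg u', hDmin_pos.le]
      have c2 : |⟪u, z⟫ * ⟪u', z⟫ / d^2| ≤ (Dmin/8)^2 * (‖u‖ * ‖u'‖) := by
        rw [abs_div, abs_of_pos hd2pos, div_le_iff₀ hd2pos, abs_mul]
        nlinarith only [hz1, hz1', abs_nonneg ⟪u, z⟫, abs_nonneg ⟪u', z⟫, hd0,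
          hDmin_pos.le, norm_nonneg u, norm_nonneg u']
      have c3 : ⟪u, u'⟫ - ⟪(V.orthogonalProjectionOnto u : EuclideanSpace ℝ (Fin (k+1))),
            (V.orthogonalProjectionOnto u' : EuclideanSpace ℝ (Fin (k+1)))⟫
          - ⟪u, z⟫ * ⟪u', z⟫ / d^2 - ⟪u, u'⟫
          = -(⟪(V.orthogonalProjectionOnto u : EuclideanSpace ℝ (Fin (k+1))),
              (V.orthogonalProjectionOnto u' : EuclideanSpace ℝ (Fin (k+1)))⟫)
            + -(⟪u, z⟫ * ⟪u', z⟫ / d^2) := by ring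
      rw [c3]
      have c4 := abs_add_le (-(⟪(V.orthogonalProjectionOnto u : EuclideanSpace ℝ (Fin (k+1))),
          (V.orthogonalProjectionOnto u' : EuclideanSpace ℝ (Fin (k+1)))⟫))
        (-(⟪u, z⟫ * ⟪u', z⟫ / d^2))
      rw [abs_neg, abs_neg] at c4
      have c5 : (Dmin/8)^2 * (‖u‖ * ‖u'‖) + (Dmin/8)^2 * (‖u‖ * ‖u'‖)
          = (Dmin^2/32) * (‖u‖ * ‖u'‖) := by ring
      linarith only [c4, c1, c2, c5]
    -- index facts and nonvanishing
    have hvalne : ∀ i : Fin k, Fin.castAdd 2 i ≠ bI ∧ Fin.castAdd 2 i ≠ gI := by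
      intro i
      have hik := i.isLt
      constructor <;> intro hcon2 <;>
        · have hval := congrArg Fin.val hcon2
          simp [hbIdef, hgIdef] at hval
          omega
    have hbgne : bI ≠ gI := by
      intro hcon2
      have hval := congrArg Fin.val hcon2
      simp [hbIdef, hgIdef] at hval
    have hune : ∀ iX iY : Fin (k+2), iX ≠ iY → (0:ℝ) < ‖y' iX - y' iY‖ := by
      intro iX iY hne
      exact norm_pos_iff.2 (sub_ne_zero.2 (fun hcon2 => hne (hinj' hcon2)))
    have htwo : ∀ (iX iY : Fin (k+2)) (γX γY : Fin k), ‖y' iX - y γX‖ ≤ h →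
        ‖y' iY - y γY‖ ≤ h → y γX = y γY → ‖y' iX - y' iY‖ ≤ 2*h := by
      intro iX iY γX γY h1 h2 heq
      have e1 : y' iX - y' iY = (y' iX - y γX) - (y' iY - y γY) + (y γX - y γY) := by abel
      have e2 : ‖y γX - y γY‖ = 0 := by rw [heq, sub_self, norm_zero]
      calc ‖y' iX - y' iY‖
          = ‖(y' iX - y γX) - (y' iY - y γY) + (y γX - y γY)‖ := by rw [← e1]
        _ ≤ ‖(y' iX - y γX) - (y' iY - y γY)‖ + ‖y γX - y γY‖ := norm_add_le _ _
        _ ≤ (‖y' iX - y γX‖ + ‖y' iY - y γY‖) + 0 :=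
            add_le_add (norm_sub_le _ _) (le_of_eq e2)
        _ ≤ 2*h := by linarith only [h1, h2]
    have hfar : ∀ (iX iY : Fin (k+2)) (γX γY : Fin k), ‖y' iX - y γX‖ ≤ h →
        ‖y' iY - y γY‖ ≤ h → γX ≠ γY → Dmin^2/4 ≤ ‖y' iX - y' iY‖^2 := by
      intro iX iY γX γY h1 h2 hne
      have e1 : y γX - y γY = -(y' iX - y γX) + (y' iX - y' iY) + (y' iY - y γY) := by abel
      have e2 : ‖y γX - y γY‖ ≤ ‖y' iX - y γX‖ + ‖y' iX - y' iY‖ + ‖y' iY - y γY‖ := by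
        rw [e1]
        calc ‖-(y' iX - y γX) + (y' iX - y' iY) + (y' iY - y γY)‖
            ≤ ‖-(y' iX - y γX)‖ + ‖y' iX - y' iY‖ + ‖y' iY - y γY‖ := norm_add₃_le
          _ = _ := by rw [norm_neg]
      have e3 := hDmin_le γX γY hne
      have e4 : Dmin/2 ≤ ‖y' iX - y' iY‖ := by linarith only [e2, e3, h1, h2, hhD4]
      nlinarith only [e4, hDmin_pos.le, norm_nonneg (y' iX - y' iY)]
    have hcoef : (0:ℝ) ≤ 1 - Dmin^2/32 := by nlinarith only [hDmin_le_one, hDmin_pos.le]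
    have hcoef8 : (0:ℝ) ≤ 1 - Dmin^2/8 := by nlinarith only [hDmin_le_one, hDmin_pos.le]
    have hD2 : Dmin^2 ≤ 1 := by nlinarith only [hDmin_le_one, hDmin_pos.le]
    set E2 : ℝ := ‖(e : EuclideanSpace ℝ (Fin (k+1)))‖^2 with hE2
    rcases eq_or_ne α β with hab | hab
    · -- the two extra points are both close to y α : three nearly coincident points
      subst hab
      have h2h₁ : ‖y' bI - y' (Fin.castAdd 2 α)‖ ≤ 2*h :=
        htwo bI (Fin.castAdd 2 α) α α hboundb (hbound α) rfl
      have h2h₂ : ‖y' gI - y' (Fin.castAdd 2 α)‖ ≤ 2*h :=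
        htwo gI (Fin.castAdd 2 α) α α hboundg (hbound α) rfl
      have h2h₃ : ‖y' gI - y' bI‖ ≤ 2*h := htwo gI bI α α hboundg hboundb rfl
      obtain ⟨hP₁, hz₁⟩ := pairfact (Fin.castAdd 2 α) bI α (hbound α) h2h₁
      obtain ⟨hP₂, hz₂⟩ := pairfact (Fin.castAdd 2 α) gI α (hbound α) h2h₂
      obtain ⟨hP₃, hz₃⟩ := pairfact bI gI α hboundb h2h₃
      obtain ⟨t₁, ht₁⟩ := hrep (y' bI - y' (Fin.castAdd 2 α))
      obtain ⟨t₂, ht₂⟩ := hrep (y' gI - y' (Fin.castAdd 2 α))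
      obtain ⟨t₃, ht₃⟩ := hrep (y' gI - y' bI)
      have hN₁ : (0:ℝ) < ‖y' bI - y' (Fin.castAdd 2 α)‖ := hune _ _ (Ne.symm (hvalne α).1)
      have hN₂ : (0:ℝ) < ‖y' gI - y' (Fin.castAdd 2 α)‖ := hune _ _ (Ne.symm (hvalne α).2)
      have hN₃ : (0:ℝ) < ‖y' gI - y' bI‖ := hune _ _ (Ne.symm hbgne)
      set u₁ : EuclideanSpace ℝ (Fin (k+1)) := y' bI - y' (Fin.castAdd 2 α) with hu₁
      set u₂ : EuclideanSpace ℝ (Fin (k+1)) := y' gI - y' (Fin.castAdd 2 α) with hu₂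
      set u₃ : EuclideanSpace ℝ (Fin (k+1)) := y' gI - y' bI with hu₃
      -- the sign conditions at the three nearly coincident points
      have s12 : (1/4) * (‖u₁‖^2 * ‖u₂‖^2) ≤ ⟪u₁, u₂⟫ := by
        have h1 := hIN bI (Fin.castAdd 2 α) gI
        have r1 : y' (Fin.castAdd 2 α) - y' bI = -u₁ := by rw [hu₁]; abel
        have r2 : y' (Fin.castAdd 2 α) - y' gI = -u₂ := by rw [hu₂]; abel
        rw [r1, r2, inner_neg_neg, norm_neg, norm_neg] at h1
        exact h1
      have s13 : ⟪u₁, u₃⟫ ≤ -(1/4) * (‖u₁‖^2 * ‖u₃‖^2) := by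
        have h1 := hIN (Fin.castAdd 2 α) bI gI
        have r1 : y' bI - y' (Fin.castAdd 2 α) = u₁ := hu₁.symm
        have r2 : y' bI - y' gI = -u₃ := by rw [hu₃]; abel
        rw [r1, r2, inner_neg_right, norm_neg] at h1
        linarith only [h1]
      have s23 : (1/4) * (‖u₂‖^2 * ‖u₃‖^2) ≤ ⟪u₂, u₃⟫ := by
        have h1 := hIN (Fin.castAdd 2 α) gI bI
        have r1 : y' gI - y' (Fin.castAdd 2 α) = u₂ := hu₂.symm
        have r2 : y' gI - y' bI = u₃ := hu₃.symm
        rw [r1, r2] at h1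
        exact h1
      -- transfer to the one-dimensional residuals
      have hq₁ : (1 - Dmin^2/32) * ‖u₁‖^2 ≤ t₁*(t₁*E2) := by
        have hh4 := hwnorm u₁ hP₁ hz₁
        rw [ht₁, real_inner_smul_left, real_inner_smul_right,
          real_inner_self_eq_norm_sq, ← hE2] at hh4
        exact hh4
      have hq₂ : (1 - Dmin^2/32) * ‖u₂‖^2 ≤ t₂*(t₂*E2) := by
        have hh4 := hwnorm u₂ hP₂ hz₂
        rw [ht₂, real_inner_smul_left, real_inner_smul_right,
          real_inner_self_eq_norm_sq, ← hE2] at hh4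
        exact hh4
      have hq₃ : (1 - Dmin^2/32) * ‖u₃‖^2 ≤ t₃*(t₃*E2) := by
        have hh4 := hwnorm u₃ hP₃ hz₃
        rw [ht₃, real_inner_smul_left, real_inner_smul_right,
          real_inner_self_eq_norm_sq, ← hE2] at hh4
        exact hh4
      have hx12 : |t₁*(t₂*E2) - ⟪u₁, u₂⟫| ≤ (Dmin^2/32) * (‖u₁‖ * ‖u₂‖) := by
        have hh4 := hwcross u₁ u₂ hP₁ hz₁ hP₂ hz₂
        rw [ht₁, ht₂, real_inner_smul_left, real_inner_smul_right,
          real_inner_self_eq_norm_sq, ← hE2] at hh4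
        exact hh4
      have hx13 : |t₁*(t₃*E2) - ⟪u₁, u₃⟫| ≤ (Dmin^2/32) * (‖u₁‖ * ‖u₃‖) := by
        have hh4 := hwcross u₁ u₃ hP₁ hz₁ hP₃ hz₃
        rw [ht₁, ht₃, real_inner_smul_left, real_inner_smul_right,
          real_inner_self_eq_norm_sq, ← hE2] at hh4
        exact hh4
      have hx23 : |t₂*(t₃*E2) - ⟪u₂, u₃⟫| ≤ (Dmin^2/32) * (‖u₂‖ * ‖u₃‖) := by
        have hh4 := hwcross u₂ u₃ hP₂ hz₂ hP₃ hz₃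
        rw [ht₂, ht₃, real_inner_smul_left, real_inner_smul_right,
          real_inner_self_eq_norm_sq, ← hE2] at hh4
        exact hh4
      -- extract the signs
      have hsq12 : ((1 - Dmin^2/32) * (‖u₁‖ * ‖u₂‖))^2 ≤ (t₁*(t₂*E2))^2 := by
        nlinarith only [hq₁, hq₂, mul_nonneg hcoef (sq_nonneg ‖u₁‖),
          mul_nonneg hcoef (sq_nonneg ‖u₂‖)]
      have hsq13 : ((1 - Dmin^2/32) * (‖u₁‖ * ‖u₃‖))^2 ≤ (t₁*(t₃*E2))^2 := by
        nlinarith only [hq₁, hq₃, mul_nonneg hcoef (sq_nonneg ‖u₁‖),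
          mul_nonneg hcoef (sq_nonneg ‖u₃‖)]
      have hsq23 : ((1 - Dmin^2/32) * (‖u₂‖ * ‖u₃‖))^2 ≤ (t₂*(t₃*E2))^2 := by
        nlinarith only [hq₂, hq₃, mul_nonneg hcoef (sq_nonneg ‖u₂‖),
          mul_nonneg hcoef (sq_nonneg ‖u₃‖)]
      have hBb12 : (Dmin^2/32) * (‖u₁‖ * ‖u₂‖) < (1 - Dmin^2/32) * (‖u₁‖ * ‖u₂‖) := by
        have hNN : (0:ℝ) < ‖u₁‖ * ‖u₂‖ := mul_pos hN₁ hN₂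
        nlinarith only [hNN, hD2]
      have hBb13 : (Dmin^2/32) * (‖u₁‖ * ‖u₃‖) < (1 - Dmin^2/32) * (‖u₁‖ * ‖u₃‖) := by
        have hNN : (0:ℝ) < ‖u₁‖ * ‖u₃‖ := mul_pos hN₁ hN₃
        nlinarith only [hNN, hD2]
      have hBb23 : (Dmin^2/32) * (‖u₂‖ * ‖u₃‖) < (1 - Dmin^2/32) * (‖u₂‖ * ‖u₃‖) := by
        have hNN : (0:ℝ) < ‖u₂‖ * ‖u₃‖ := mul_pos hN₂ hN₃
        nlinarith only [hNN, hD2]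
      have hb12 : (0:ℝ) ≤ (Dmin^2/32) * (‖u₁‖ * ‖u₂‖) := by positivity
      have hb13 : (0:ℝ) ≤ (Dmin^2/32) * (‖u₁‖ * ‖u₃‖) := by positivity
      have hb23 : (0:ℝ) ≤ (Dmin^2/32) * (‖u₂‖ * ‖u₃‖) := by positivity
      have hA12 : (1 - Dmin^2/32) * (‖u₁‖ * ‖u₂‖) ≤ t₁*(t₂*E2) := by
        apply pos_of_sq hb12 hBb12 ?_ hsq12
        have habs' := abs_le.1 hx12
        have hx0 : (0:ℝ) ≤ ⟪u₁, u₂⟫ := by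
          refine le_trans ?_ s12
          positivity
        linarith only [habs'.1, hx0]
      have hA23 : (1 - Dmin^2/32) * (‖u₂‖ * ‖u₃‖) ≤ t₂*(t₃*E2) := by
        apply pos_of_sq hb23 hBb23 ?_ hsq23
        have habs' := abs_le.1 hx23
        have hx0 : (0:ℝ) ≤ ⟪u₂, u₃⟫ := by
          refine le_trans ?_ s23
          positivity
        linarith only [habs'.1, hx0]
      have hA13 : (1 - Dmin^2/32) * (‖u₁‖ * ‖u₃‖) ≤ -(t₁*(t₃*E2)) := by
        apply pos_of_sq hb13 hBb13 ?_ (by linarith only [hsq13])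
        have habs' := abs_le.1 hx13
        have hx0 : ⟪u₁, u₃⟫ ≤ 0 := by
          refine le_trans s13 ?_
          have : (0:ℝ) ≤ (1/4) * (‖u₁‖^2 * ‖u₃‖^2) := by positivity
          linarith only [this]
        linarith only [habs'.2, hx0]
      -- contradiction : the product of the three terms is both positive and negative
      have hp12 : (0:ℝ) < t₁*(t₂*E2) :=
        lt_of_lt_of_le (lt_of_le_of_lt hb12 hBb12) hA12
      have hp23 : (0:ℝ) < t₂*(t₃*E2) :=
        lt_of_lt_of_le (lt_of_le_of_lt hb23 hBb23) hA23
      have hp13 : t₁*(t₃*E2) < 0 := by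
        have : (0:ℝ) < (1 - Dmin^2/32) * (‖u₁‖ * ‖u₃‖) := lt_of_le_of_lt hb13 hBb13
        linarith only [this, hA13]
      have hfin1 : (0:ℝ) < (t₁*(t₂*E2)) * (t₂*(t₃*E2)) := mul_pos hp12 hp23
      have hfin2 : ((t₁*(t₂*E2)) * (t₂*(t₃*E2))) * (t₁*(t₃*E2)) < 0 :=
        mul_neg_of_pos_of_neg hfin1 hp13
      have hiden : ((t₁*(t₂*E2)) * (t₂*(t₃*E2))) * (t₁*(t₃*E2))
          = (t₁*t₂*t₃)^2 * E2^3 := by ring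
      rw [hiden] at hfin2
      have hE3 : (0:ℝ) ≤ (t₁*t₂*t₃)^2 * E2^3 := by positivity
      linarith only [hfin2, hE3]
    · -- the two extra points are close to distinct points y α ≠ y β
      have h2h₁ : ‖y' bI - y' (Fin.castAdd 2 α)‖ ≤ 2*h :=
        htwo bI (Fin.castAdd 2 α) α α hboundb (hbound α) rfl
      have h2h₂ : ‖y' gI - y' (Fin.castAdd 2 β)‖ ≤ 2*h :=
        htwo gI (Fin.castAdd 2 β) β β hboundg (hbound β) rfl
      obtain ⟨hP₁, hz₁⟩ := pairfact (Fin.castAdd 2 α) bI α (hbound α) h2h₁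
      obtain ⟨hP₂, hz₂⟩ := pairfact (Fin.castAdd 2 β) gI β (hbound β) h2h₂
      obtain ⟨t₁, ht₁⟩ := hrep (y' bI - y' (Fin.castAdd 2 α))
      obtain ⟨t₂, ht₂⟩ := hrep (y' gI - y' (Fin.castAdd 2 β))
      have hN₁ : (0:ℝ) < ‖y' bI - y' (Fin.castAdd 2 α)‖ := hune _ _ (Ne.symm (hvalne α).1)
      have hN₂ : (0:ℝ) < ‖y' gI - y' (Fin.castAdd 2 β)‖ := hune _ _ (Ne.symm (hvalne β).2)
      have d11 := hfar (Fin.castAdd 2 α) (Fin.castAdd 2 β) α β (hbound α) (hbound β) hab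
      have d22 := hfar bI gI α β hboundb hboundg hab
      have d12 := hfar bI (Fin.castAdd 2 β) α β hboundb (hbound β) hab
      have d21 := hfar (Fin.castAdd 2 α) gI α β (hbound α) hboundg hab
      have hup1 := hWup (Fin.castAdd 2 α) bI (Fin.castAdd 2 β)
      have hlo1 := hWlo (Fin.castAdd 2 α) bI gI
      have hup2 := hWup (Fin.castAdd 2 α) bI gI
      have hlo2 := hWlo (Fin.castAdd 2 α) bI (Fin.castAdd 2 β)
      have hup1' := hWup (Fin.castAdd 2 β) gI (Fin.castAdd 2 α)
      have hlo1' := hWlo (Fin.castAdd 2 β) gI bI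
      have hup2' := hWup (Fin.castAdd 2 β) gI bI
      have hlo2' := hWlo (Fin.castAdd 2 β) gI (Fin.castAdd 2 α)
      set u₁ : EuclideanSpace ℝ (Fin (k+1)) := y' bI - y' (Fin.castAdd 2 α) with hu₁
      set u₂ : EuclideanSpace ℝ (Fin (k+1)) := y' gI - y' (Fin.castAdd 2 β) with hu₂
      have exp1 : ⟪u₁, u₂⟫
          = ⟪u₁, y' (Fin.castAdd 2 α) - y' (Fin.castAdd 2 β)⟫
            - ⟪u₁, y' (Fin.castAdd 2 α) - y' gI⟫ := by
        rw [← inner_sub_right, hu₂]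
        congr 1
        abel
      have exp2 : ⟪u₂, u₁⟫
          = ⟪u₂, y' (Fin.castAdd 2 β) - y' (Fin.castAdd 2 α)⟫
            - ⟪u₂, y' (Fin.castAdd 2 β) - y' bI⟫ := by
        rw [← inner_sub_right, hu₁]
        congr 1
        abel
      have d11' : Dmin^2/4 ≤ ‖y' (Fin.castAdd 2 β) - y' (Fin.castAdd 2 α)‖^2 := by
        rw [norm_sub_rev]; exact d11
      have d22' : Dmin^2/4 ≤ ‖y' gI - y' bI‖^2 := by
        rw [norm_sub_rev]; exact d22
      have d12' : Dmin^2/4 ≤ ‖y' (Fin.castAdd 2 β) - y' bI‖^2 := by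
        rw [norm_sub_rev]; exact d12
      have d21' : Dmin^2/4 ≤ ‖y' gI - y' (Fin.castAdd 2 α)‖^2 := by
        rw [norm_sub_rev]; exact d21
      have habs1 : |⟪u₁, u₂⟫| ≤ (1 - Dmin^2/8) * ‖u₁‖^2 := by
        rw [abs_le]
        constructor
        · rw [exp1]
          nlinarith only [hlo2, hup2, d12, d21, sq_nonneg ‖u₁‖]
        · rw [exp1]
          nlinarith only [hup1, hlo1, d11, d22, sq_nonneg ‖u₁‖]
      have habs2 : |⟪u₁, u₂⟫| ≤ (1 - Dmin^2/8) * ‖u₂‖^2 := by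
        rw [show ⟪u₁, u₂⟫ = ⟪u₂, u₁⟫ from real_inner_comm _ _, abs_le]
        constructor
        · rw [exp2]
          nlinarith only [hlo2', hup2', d12', d21', sq_nonneg ‖u₂‖]
        · rw [exp2]
          nlinarith only [hup1', hlo1', d11', d22', sq_nonneg ‖u₂‖]
      have hNN : (0:ℝ) < ‖u₁‖ * ‖u₂‖ := mul_pos hN₁ hN₂
      have habs : |⟪u₁, u₂⟫| ≤ (1 - Dmin^2/8) * (‖u₁‖ * ‖u₂‖) := by
        nlinarith only [habs1, habs2, abs_nonneg ⟪u₁, u₂⟫, norm_nonneg u₁, norm_nonneg u₂,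
          hcoef8, hNN]
      have hq₁ : (1 - Dmin^2/32) * ‖u₁‖^2 ≤ t₁*(t₁*E2) := by
        have hh4 := hwnorm u₁ hP₁ hz₁
        rw [ht₁, real_inner_smul_left, real_inner_smul_right,
          real_inner_self_eq_norm_sq, ← hE2] at hh4
        exact hh4
      have hq₂ : (1 - Dmin^2/32) * ‖u₂‖^2 ≤ t₂*(t₂*E2) := by
        have hh4 := hwnorm u₂ hP₂ hz₂
        rw [ht₂, real_inner_smul_left, real_inner_smul_right,
          real_inner_self_eq_norm_sq, ← hE2] at hh4
        exact hh4
      have hx12 : |t₁*(t₂*E2) - ⟪u₁, u₂⟫| ≤ (Dmin^2/32) * (‖u₁‖ * ‖u₂‖) := by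
        have hh4 := hwcross u₁ u₂ hP₁ hz₁ hP₂ hz₂
        rw [ht₁, ht₂, real_inner_smul_left, real_inner_smul_right,
          real_inner_self_eq_norm_sq, ← hE2] at hh4
        exact hh4
      have hsq12 : ((1 - Dmin^2/32) * (‖u₁‖ * ‖u₂‖))^2 ≤ (t₁*(t₂*E2))^2 := by
        nlinarith only [hq₁, hq₂, mul_nonneg hcoef (sq_nonneg ‖u₁‖),
          mul_nonneg hcoef (sq_nonneg ‖u₂‖)]
      have hAub : |t₁*(t₂*E2)| ≤ (1 - Dmin^2/8 + Dmin^2/32) * (‖u₁‖ * ‖u₂‖) := by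
        have t5 := abs_add_le ⟪u₁, u₂⟫ (t₁*(t₂*E2) - ⟪u₁, u₂⟫)
        have t6 : ⟪u₁, u₂⟫ + (t₁*(t₂*E2) - ⟪u₁, u₂⟫) = t₁*(t₂*E2) := by ring
        rw [t6] at t5
        linarith only [t5, habs, hx12]
      have hbub : (0:ℝ) ≤ (1 - Dmin^2/8 + Dmin^2/32) * (‖u₁‖ * ‖u₂‖) := by
        nlinarith only [hcoef8, hNN.le, hDmin_pos.le]
      have hAub2 : (t₁*(t₂*E2))^2 ≤ ((1 - Dmin^2/8 + Dmin^2/32) * (‖u₁‖ * ‖u₂‖))^2 := by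
        nlinarith only [hAub, hbub, sq_abs (t₁*(t₂*E2)), abs_nonneg (t₁*(t₂*E2))]
      have hle : (1 - Dmin^2/32) * (‖u₁‖ * ‖u₂‖)
          ≤ (1 - Dmin^2/8 + Dmin^2/32) * (‖u₁‖ * ‖u₂‖) := by
        have h7 : (0:ℝ) ≤ (1 - Dmin^2/32) * (‖u₁‖ * ‖u₂‖) := by
          nlinarith only [hcoef, hNN.le]
        nlinarith only [hsq12, hAub2, h7, hbub]
      nlinarith only [hle, mul_pos (mul_pos hDmin_pos hDmin_pos) hNN]

  -- conclusion
  rw [hcr, hcr']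
  rcases eq_or_ne k 1 with hk1 | hk1
  · -- k = 1 : here ρ = 0
    have hall : ∀ i : Fin k, i = i0 := by
      intro i
      have := i.isLt
      ext
      simp only [hi0]
      omega
    have hrange : Set.range y = {y i0} := by
      apply Set.eq_of_subset_of_subset
      · rintro x ⟨i, rfl⟩
        rw [hall i]
        rfl
      · rintro x hx
        rw [Set.mem_singleton_iff] at hx
        exact ⟨i0, hx.symm⟩
    have hceq : c = y i0 := by
      have h1 := hcmem
      rw [hrange] at h1
      rwa [AffineSubspace.mem_affineSpan_singleton] at h1
    have hρeq : ρ = 0 := by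
      have h1 := hyc i0
      rw [hceq] at h1
      simpa using h1.symm
    have hρ'le : ρ' ≤ (K₁ + C₂ + 1) * h := by
      have h2 : ‖c' - y i0‖ ≤ ‖p - c‖ + d := by
        have h3 : c' - y i0 = (p - c) + z := by rw [hc'pz, hceq]; abel
        rw [h3, hd_def]
        exact norm_add_le _ _
      calc ρ' = ‖c' - y' (Fin.castAdd 2 i0)‖ := (hsph _).symm
        _ = ‖(c' - y i0) - (y' (Fin.castAdd 2 i0) - y i0)‖ := by congr 1; abel
        _ ≤ ‖c' - y i0‖ + ‖y' (Fin.castAdd 2 i0) - y i0‖ := norm_sub_le _ _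
        _ ≤ (‖p-c‖ + d) + h := add_le_add h2 (hbound i0)
        _ ≤ (K₁*h + C₂*h) + h := by linarith only [hpc, hd]
        _ = (K₁ + C₂ + 1) * h := by ring
    rw [hρeq, sub_zero, abs_of_nonneg hρ0']
    calc ρ' ≤ (K₁ + C₂ + 1) * h := hρ'le
      _ ≤ C * h := by
          apply mul_le_mul_of_nonneg_right ?_ h0
          rw [hC]; linarith only [hCterm]
  · -- k ≥ 2 : here ρ ≥ Dmin / 2
    have hk2 : 2 ≤ k := by omega
    have hj1 : (⟨1, by omega⟩ : Fin k) ≠ i0 := by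
      intro hcon
      have := congrArg Fin.val hcon
      simp [hi0] at this
    have hρD : Dmin/2 ≤ ρ := by
      have h1 := hDmin_le _ _ hj1
      have h2 : ‖y ⟨1, by omega⟩ - y i0‖ ≤ 2*ρ := by
        calc ‖y ⟨1, by omega⟩ - y i0‖ = ‖(c - y i0) - (c - y ⟨1, by omega⟩)‖ := by congr 1; abel
          _ ≤ ‖c - y i0‖ + ‖c - y ⟨1, by omega⟩‖ := norm_sub_le _ _
          _ = 2*ρ := by rw [hyc, hyc]; ring
      linarith only [h1, h2]
    have habs2 : |ρ'^2 - ρ^2| ≤ (K₂ + C₂^2)*h := by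
      have hd2 : d^2 ≤ C₂^2 * h := by
        have h1 : d^2 ≤ (C₂*h)^2 := by nlinarith only [hd, hd0]
        have hhh : h*h ≤ h := mul_le_of_le_one_right h0 hh1
        nlinarith only [h1, hhh, hC₂0.le, sq_nonneg C₂]
      have hm := abs_le.1 hmain
      rw [abs_le]
      constructor <;> linarith only [hm.1, hm.2, hd2, sq_nonneg d]
    have hsum : Dmin/2 ≤ ρ + ρ' := by linarith only [hρD, hρ0']
    have hkey : |ρ' - ρ| * (Dmin/2) ≤ (K₂ + C₂^2)*h := by
      calc |ρ' - ρ| * (Dmin/2) ≤ |ρ' - ρ| * (ρ + ρ') :=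
            mul_le_mul_of_nonneg_left hsum (abs_nonneg _)
        _ = |ρ'^2 - ρ^2| := by
            rw [show ρ'^2 - ρ^2 = (ρ' - ρ)*(ρ + ρ') by ring, abs_mul,
              abs_of_nonneg (show (0:ℝ) ≤ ρ + ρ' by linarith only [hρ0, hρ0'])]
        _ ≤ (K₂ + C₂^2)*h := habs2
    have hfin : |ρ' - ρ| ≤ (2*(K₂ + C₂^2)/Dmin) * h := by
      rw [div_mul_eq_mul_div, le_div_iff₀ hDmin_pos]
      linarith only [hkey]
    calc |ρ' - ρ| ≤ (2*(K₂ + C₂^2)/Dmin) * h := hfin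
      _ ≤ C * h := by
          apply mul_le_mul_of_nonneg_right ?_ h0
          rw [hC]
          have h1 : 0 < K₁ := by rw [hK₁]; positivity
          linarith only [hC₂0, h1]
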